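/- Let K be a field and f, g, h ∈ K⟨x₁,…,xₙ⟩ with f nonscalar. If fg = gf and fh = hf, then gh = hg. In other words, the centralizer of a nonscalar element of a free associative algebra is commutative. -/

import Mathlib

namespace Bergman

variable {n : ℕ}

abbrev M (n : ℕ) := FreeMonoid (Fin n)

/-- numeric value of a word, base `n`. -/
def nval (w : List (Fin n)) : ℕ := w.foldl (fun (a : ℕ) (c : Fin n) => a * n + (c : ℕ)) 0

lemma nval_aux (w : List (Fin n)) (a : ℕ) :
    w.foldl (fun (a : ℕ) (c : Fin n) => a * n + (c : ℕ)) a = a * n ^ w.length + nval w := by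
  induction w generalizing a with
  | nil => simp [nval]
  | cons c l ih =>
    simp only [List.foldl_cons, List.length_cons]
    rw [ih (a * n + (c : ℕ))]
    have h : nval (c :: l) = ((0:ℕ) * n + (c : ℕ)) * n ^ l.length + nval l := by
      simp only [nval, List.foldl_cons]; exact ih _
    rw [h]
    ring

lemma nval_cons (c : Fin n) (l : List (Fin n)) :
    nval (c :: l) = (c : ℕ) * n ^ l.length + nval l := by
  simp only [nval, List.foldl_cons]
  rw [nval_aux l]
  show _ = (c : ℕ) * n ^ l.length + nval l
  ring

lemma nval_lt (w : List (Fin n)) : nval w < n ^ w.length := by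
  induction w with
  | nil => simp [nval]
  | cons c l ih =>
    have hc : (c : ℕ) + 1 ≤ n := c.2
    rw [nval_cons, List.length_cons, pow_succ]
    calc (c : ℕ) * n ^ l.length + nval l < (c : ℕ) * n ^ l.length + n ^ l.length :=
          Nat.add_lt_add_left ih _
      _ = ((c : ℕ) + 1) * n ^ l.length := by ring
      _ ≤ n * n ^ l.length := Nat.mul_le_mul_right _ hc
      _ = n ^ l.length * n := by ring

lemma nval_append (u w : List (Fin n)) :
    nval (u ++ w) = nval u * n ^ w.length + nval w := by
  simp only [nval, List.foldl_append]
  rw [nval_aux w]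
  rfl

private lemma digit_eq {c c' x x' B : ℕ} (hB : 0 < B) (hx : x < B) (hx' : x' < B)
    (h : c * B + x = c' * B + x') : c = c' ∧ x = x' := by
  have h1 : (c * B + x) / B = c := by
    rw [mul_comm, Nat.mul_add_div hB, Nat.div_eq_of_lt hx, Nat.add_zero]
  have h2 : (c' * B + x') / B = c' := by
    rw [mul_comm, Nat.mul_add_div hB, Nat.div_eq_of_lt hx', Nat.add_zero]
  have hc : c = c' := by rw [← h1, ← h2, h]
  constructor
  · exact hc
  · subst hc; omega

lemma nval_inj {u w : List (Fin n)} (hl : u.length = w.length) (hv : nval u = nval w) :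
    u = w := by
  induction u generalizing w with
  | nil => cases w with
    | nil => rfl
    | cons c l => simp at hl
  | cons c l ih =>
    cases w with
    | nil => simp at hl
    | cons c' l' =>
      simp only [List.length_cons, Nat.succ.injEq] at hl
      rw [nval_cons, nval_cons, ← hl] at hv
      have hn : 0 < n := c.pos
      have hd := digit_eq (pow_pos hn l.length) (nval_lt l) (hl ▸ nval_lt l') hv
      have : c = c' := Fin.ext hd.1
      rw [this, ih hl hd.2]

/-- the embedding of words into `ℕ ×ₗ ℕ` : degree first, then value. -/
def wkey (w : M n) : ℕ ×ₗ ℕ := toLex (w.length, nval w.toList)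

lemma wkey_injective : Function.Injective (wkey (n := n)) := by
  intro u v h
  have h' : (u.length, nval u.toList) = (v.length, nval v.toList) := by
    exact congrArg ofLex h
  have h1 : u.length = v.length := congrArg Prod.fst h'
  have h2 : nval u.toList = nval v.toList := congrArg Prod.snd h'
  exact FreeMonoid.toList.injective (nval_inj h1 h2)

noncomputable instance : LinearOrder (M n) := LinearOrder.lift' wkey wkey_injective

lemma le_def {u v : M n} : u ≤ v ↔ wkey u ≤ wkey v := Iff.rfl

lemma lt_def {u v : M n} : u < v ↔ wkey u < wkey v := by
  rw [lt_iff_le_not_ge, lt_iff_le_not_ge, le_def, le_def]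

lemma lt_iff' {u v : M n} : u < v ↔
    u.length < v.length ∨ (u.length = v.length ∧ nval u.toList < nval v.toList) := by
  rw [lt_def, wkey, wkey, Prod.Lex.lt_iff]; exact Iff.rfl

lemma length_le_of_le {u v : M n} (h : u ≤ v) : u.length ≤ v.length := by
  rcases eq_or_lt_of_le h with rfl | h
  · exact le_rfl
  · rcases lt_iff'.1 h with h | ⟨h, _⟩ <;> omega

lemma pow_len_pos (w : M n) : 0 < n ^ w.length := by
  cases h : w.toList with
  | nil =>
    have hw : w.length = 0 := by
      have : w.toList.length = 0 := by rw [h]; rfl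
      exact this
    simp [hw]
  | cons c l =>
    have hn : 0 < n := c.pos
    exact pow_pos hn _

lemma nval_toList_mul (u v : M n) :
    nval (u * v).toList = nval u.toList * n ^ v.length + nval v.toList := by
  rw [FreeMonoid.toList_mul, nval_append]
  rfl

lemma mul_lt_mul_left'' (w : M n) {u v : M n} (h : u < v) : w * u < w * v := by
  rcases lt_iff'.1 h with h | h
  . exact lt_iff'.2 (Or.inl (by simp only [FreeMonoid.length_mul]; omega))
  . refine lt_iff'.2 (Or.inr ⟨by simp only [FreeMonoid.length_mul]; omega, ?_⟩)
    rw [nval_toList_mul, nval_toList_mul, h.1]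
    omega

lemma mul_lt_mul_right'' (w : M n) {u v : M n} (h : u < v) : u * w < v * w := by
  rcases lt_iff'.1 h with h | h
  . exact lt_iff'.2 (Or.inl (by simp only [FreeMonoid.length_mul]; omega))
  . refine lt_iff'.2 (Or.inr ⟨by simp only [FreeMonoid.length_mul]; omega, ?_⟩)
    rw [nval_toList_mul, nval_toList_mul]
    have hp := pow_len_pos w
    have := (Nat.mul_lt_mul_right hp).2 h.2
    omega

lemma mul_le_mul_left'' (w : M n) {u v : M n} (h : u ≤ v) : w * u ≤ w * v := by
  rcases eq_or_lt_of_le h with rfl | h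
  . exact le_rfl
  . exact le_of_lt (mul_lt_mul_left'' w h)

lemma mul_le_mul_right'' (w : M n) {u v : M n} (h : u ≤ v) : u * w ≤ v * w := by
  rcases eq_or_lt_of_le h with rfl | h
  . exact le_rfl
  . exact le_of_lt (mul_lt_mul_right'' w h)

lemma mul_le_mul'' {a b c d : M n} (h1 : a ≤ b) (h2 : c ≤ d) : a * c ≤ b * d :=
  le_trans (mul_le_mul_right'' c h1) (mul_le_mul_left'' b h2)

lemma mul_lt_of_lt_of_le {a b c d : M n} (h1 : a < b) (h2 : c ≤ d) : a * c < b * d :=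
  lt_of_lt_of_le (mul_lt_mul_right'' c h1) (mul_le_mul_left'' b h2)

lemma mul_lt_of_le_of_lt {a b c d : M n} (h1 : a ≤ b) (h2 : c < d) : a * c < b * d :=
  lt_of_le_of_lt (mul_le_mul_right'' c h1) (mul_lt_mul_left'' b h2)

lemma length_pow (u : M n) (k : ℕ) : (u ^ k).length = k * u.length := by
  induction k with
  | zero => rw [pow_zero, FreeMonoid.length_one, Nat.zero_mul]
  | succ k ih =>
    rw [pow_succ, FreeMonoid.length_mul, ih]
    ring

lemma length_eq_zero_iff {u : M n} : u.length = 0 ↔ u = 1 := by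
  constructor
  . intro h
    apply FreeMonoid.toList.injective
    have : u.toList.length = 0 := h
    rw [List.length_eq_zero_iff.1 this]
    rfl
  . rintro rfl; rfl

lemma pow_lt_pow_word {t : M n} (ht : t ≠ 1) {a b : ℕ} (h : a < b) : t ^ a < t ^ b := by
  have hl : 0 < t.length := by
    rcases Nat.eq_zero_or_pos t.length with h0 | h0
    . exact absurd (length_eq_zero_iff.1 h0) ht
    . exact h0
  exact lt_iff'.2 (Or.inl (by rw [length_pow, length_pow]; exact (Nat.mul_lt_mul_right hl).2 h))

lemma pow_le_pow_word {t : M n} (ht : t ≠ 1) {a b : ℕ} (h : a ≤ b) : t ^ a ≤ t ^ b := by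
  rcases eq_or_lt_of_le h with rfl | h
  . exact le_rfl
  . exact le_of_lt (pow_lt_pow_word ht h)

lemma pow_word_lt_iff {t : M n} (ht : t ≠ 1) {a b : ℕ} : t ^ a < t ^ b ↔ a < b := by
  constructor
  . intro h
    by_contra hab
    exact absurd (pow_le_pow_word ht (Nat.le_of_not_lt hab)) (not_le_of_gt h)
  . exact pow_lt_pow_word ht

section Val

variable {K : Type} [Field K]

open Classical in
/-- the lowest word of a nonzero element. -/
noncomputable def V (x : MonoidAlgebra K (M n)) : M n :=
  if h : x = 0 then 1 else x.coeff.support.min' (Finsupp.support_nonempty_iff.2 (by simpa using h))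

lemma V_mem {x : MonoidAlgebra K (M n)} (hx : x ≠ 0) : V x ∈ x.coeff.support := by
  rw [V]
  rw [dif_neg hx]
  exact Finset.min'_mem _ _

lemma V_le {x : MonoidAlgebra K (M n)} (hx : x ≠ 0) {w : M n} (hw : w ∈ x.coeff.support) :
    V x ≤ w := by
  rw [V, dif_neg hx]
  exact Finset.min'_le _ _ hw

lemma lc_ne_zero {x : MonoidAlgebra K (M n)} (hx : x ≠ 0) : x.coeff (V x) ≠ 0 :=
  Finsupp.mem_support_iff.1 (V_mem hx)

lemma coeff_mul_V {x y : MonoidAlgebra K (M n)} (hx : x ≠ 0) (hy : y ≠ 0) :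
    (x * y).coeff (V x * V y) = x.coeff (V x) * y.coeff (V y) := by
  classical
  rw [MonoidAlgebra.coeff_mul, Finsupp.sum, Finset.sum_eq_single (V x)]
  . rw [Finsupp.sum, Finset.sum_eq_single (V y)]
    . show (if V x * V y = V x * V y then x.coeff (V x) * y.coeff (V y) else 0) = _
      rw [if_pos rfl]
    . intro b hb hbne
      show (if V x * b = V x * V y then x.coeff (V x) * y.coeff b else 0) = 0
      rw [if_neg]
      intro hEq
      exact hbne (mul_left_cancel hEq)
    . intro hns
      exact absurd (V_mem hy) hns
  . intro a ha hane
    apply Finset.sum_eq_zero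
    intro b hb
    show (if a * b = V x * V y then x.coeff a * y.coeff b else 0) = 0
    rw [if_neg]
    intro hEq
    have h1 : V x < a := lt_of_le_of_ne (V_le hx ha) (Ne.symm hane)
    have h2 : V y ≤ b := V_le hy hb
    exact absurd hEq (ne_of_gt (mul_lt_of_lt_of_le h1 h2))
  . intro hns
    exact absurd (V_mem hx) hns

lemma support_mul_V_le {x y : MonoidAlgebra K (M n)} (hx : x ≠ 0) (hy : y ≠ 0)
    {w : M n} (hw : w ∈ (x * y).coeff.support) : V x * V y ≤ w := by
  classical
  have h := MonoidAlgebra.support_coeff_mul_subset x y hw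
  rw [Finset.mem_mul] at h
  obtain ⟨a, ha, b, hb, rfl⟩ := h
  exact mul_le_mul'' (V_le hx ha) (V_le hy hb)

lemma mul_ne_zero'' {x y : MonoidAlgebra K (M n)} (hx : x ≠ 0) (hy : y ≠ 0) :
    x * y ≠ 0 := by
  intro h
  have := coeff_mul_V hx hy
  rw [h] at this
  simp only [MonoidAlgebra.coeff_zero, Finsupp.coe_zero, Pi.zero_apply] at this
  exact mul_ne_zero (lc_ne_zero hx) (lc_ne_zero hy) this.symm

lemma V_mul {x y : MonoidAlgebra K (M n)} (hx : x ≠ 0) (hy : y ≠ 0) :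
    V (x * y) = V x * V y := by
  refine le_antisymm ?_ (support_mul_V_le hx hy (V_mem (mul_ne_zero'' hx hy)))
  apply V_le (mul_ne_zero'' hx hy)
  rw [Finsupp.mem_support_iff, coeff_mul_V hx hy]
  exact mul_ne_zero (lc_ne_zero hx) (lc_ne_zero hy)

lemma lc_mul {x y : MonoidAlgebra K (M n)} (hx : x ≠ 0) (hy : y ≠ 0) :
    (x * y).coeff (V (x * y)) = x.coeff (V x) * y.coeff (V y) := by
  rw [V_mul hx hy, coeff_mul_V hx hy]

lemma V_one : V (1 : MonoidAlgebra K (M n)) = 1 := by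
  classical
  have h1 : (1 : MonoidAlgebra K (M n)).coeff.support = {(1 : M n)} := by
    rw [MonoidAlgebra.one_def]
    exact Finsupp.support_single_ne_zero _ one_ne_zero
  rw [V]
  rw [dif_neg (one_ne_zero)]
  simp [h1]

lemma lc_one : (1 : MonoidAlgebra K (M n)).coeff (V (1 : MonoidAlgebra K (M n))) = 1 := by
  rw [V_one, MonoidAlgebra.one_def]
  exact Finsupp.single_eq_same

lemma pow_ne_zero'' {x : MonoidAlgebra K (M n)} (hx : x ≠ 0) (k : ℕ) : x ^ k ≠ 0 := by
  induction k with
  | zero => simpa using one_ne_zero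
  | succ k ih => rw [pow_succ]; exact mul_ne_zero'' ih hx

lemma V_pow {x : MonoidAlgebra K (M n)} (hx : x ≠ 0) (k : ℕ) : V (x ^ k) = (V x) ^ k := by
  induction k with
  | zero =>
    rw [pow_zero, pow_zero, V_one]
  | succ k ih =>
    rw [pow_succ, pow_succ, V_mul (pow_ne_zero'' hx k) hx, ih]

lemma lc_pow {x : MonoidAlgebra K (M n)} (hx : x ≠ 0) (k : ℕ) :
    (x ^ k).coeff (V (x ^ k)) = (x.coeff (V x)) ^ k := by
  induction k with
  | zero =>
    rw [pow_zero, pow_zero, lc_one]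
  | succ k ih =>
    rw [pow_succ, pow_succ, lc_mul (pow_ne_zero'' hx k) hx, ih]

lemma V_smul {x : MonoidAlgebra K (M n)} {c : K} (hc : c ≠ 0) : V (c • x) = V x := by
  classical
  by_cases hx : x = 0
  . rw [hx, smul_zero]
  . rw [V, V]
    rw [dif_neg hx, dif_neg (smul_ne_zero hc hx)]
    congr 1
    exact Finsupp.support_smul_eq hc

lemma coeff_smul {x : MonoidAlgebra K (M n)} (c : K) (w : M n) : (c • x).coeff w = c * x.coeff w := by
  rw [MonoidAlgebra.coeff_smul, Finsupp.smul_apply, smul_eq_mul]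

lemma V_sub_gt {x y : MonoidAlgebra K (M n)} (hx : x ≠ 0) (hy : y ≠ 0)
    (hV : V x = V y) (hlc : x.coeff (V x) = y.coeff (V y)) (hne : x ≠ y) : V x < V (x - y) := by
  classical
  have hsub : x - y ≠ 0 := sub_ne_zero.2 hne
  have hmem := V_mem hsub
  have hsupp := Finsupp.support_sub (MonoidAlgebra.coeff_sub x y ▸ hmem)
  have hge : V x ≤ V (x - y) := by
    rcases Finset.mem_union.1 hsupp with h | h
    . exact V_le hx h
    . rw [hV]; exact V_le hy h
  refine lt_of_le_of_ne hge ?_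
  intro hEq
  have hyy : y.coeff (V x) = y.coeff (V y) := by rw [hV]
  have : (x - y).coeff (V (x - y)) = 0 := by
    rw [MonoidAlgebra.coeff_sub, Finsupp.sub_apply, ← hEq, hyy, hlc, sub_self]
  exact lc_ne_zero hsub this

end Val


section Words

lemma comm_pow_word {W u : M n} (hu : u * W = W * u) (k : ℕ) : u * W ^ k = W ^ k * u := by
  induction k with
  | zero => simp
  | succ k ih =>
    rw [pow_succ, ← mul_assoc, ih, mul_assoc, hu, ← mul_assoc]

lemma toList_length_eq (u : M n) : u.toList.length = u.length := rfl

lemma prefix_of_comm {W u : M n} (hu : u * W = W * u) {k : ℕ}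
    (hk : u.length ≤ (W ^ k).length) :
    u.toList = (W ^ k).toList.take u.length := by
  have h := comm_pow_word hu k
  have hl := congrArg FreeMonoid.toList h
  rw [FreeMonoid.toList_mul, FreeMonoid.toList_mul] at hl
  have hk' : u.toList.length ≤ (W ^ k).toList.length := hk
  calc u.toList = (u.toList ++ (W ^ k).toList).take u.toList.length := by
        rw [List.take_left]
    _ = ((W ^ k).toList ++ u.toList).take u.toList.length := by rw [hl]
    _ = (W ^ k).toList.take u.length := List.take_append_of_le_length hk'

lemma exists_min_word (W : M n) (hW : W ≠ 1) :
    ∃ t : M n, t ≠ 1 ∧ t * W = W * t ∧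
      ∀ s : M n, s ≠ 1 → s * W = W * s → t.length ≤ s.length := by
  classical
  have hQ : ∃ ℓ, ∃ u : M n, u ≠ 1 ∧ u.length = ℓ ∧ u * W = W * u :=
    ⟨W.length, W, hW, rfl, rfl⟩
  obtain ⟨u, hu1, hu2, hu3⟩ := Nat.find_spec hQ
  refine ⟨u, hu1, hu3, ?_⟩
  intro s hs1 hs2
  rw [hu2]
  exact Nat.find_min' hQ ⟨s, hs1, rfl, hs2⟩

lemma eq_pow_of_comm {W t : M n} (hW : W ≠ 1) (htne : t ≠ 1) (htc : t * W = W * t)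
    (htmin : ∀ s : M n, s ≠ 1 → s * W = W * s → t.length ≤ s.length) :
    ∀ u : M n, u * W = W * u → ∃ e, u = t ^ e := by
  have hWlen : 0 < W.length := by
    rcases Nat.eq_zero_or_pos W.length with h0 | h0
    . exact absurd (length_eq_zero_iff.1 h0) hW
    . exact h0
  have htlen : 0 < t.length := by
    rcases Nat.eq_zero_or_pos t.length with h0 | h0
    . exact absurd (length_eq_zero_iff.1 h0) htne
    . exact h0
  suffices hsuf : ∀ L, ∀ u : M n, u.length ≤ L → u * W = W * u → ∃ e, u = t ^ e by
    intro u hu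
    exact hsuf u.length u le_rfl hu
  intro L
  induction L with
  | zero =>
    intro u hL _
    have : u = 1 := length_eq_zero_iff.1 (Nat.le_zero.1 hL)
    exact ⟨0, by rw [this, pow_zero]⟩
  | succ L IH =>
  intro u hL hu
  by_cases hu1 : u = 1
  . exact ⟨0, by rw [hu1, pow_zero]⟩
  . have hlen : t.length ≤ u.length := htmin u hu1 hu
    set k := u.length with hk
    have hbound : u.length ≤ (W ^ k).length := by
      rw [length_pow]
      calc u.length = k * 1 := by omega
        _ ≤ k * W.length := Nat.mul_le_mul_left k hWlen
    have hbt : t.length ≤ (W ^ k).length := le_trans hlen hbound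
    have hpu : u.toList = (W ^ k).toList.take u.length := prefix_of_comm hu hbound
    have hpt : t.toList = (W ^ k).toList.take t.length := prefix_of_comm htc hbt
    have htu : t.toList = u.toList.take t.length := by
      rw [hpu, List.take_take, Nat.min_eq_left hlen, hpt]
    set u' : M n := FreeMonoid.ofList (u.toList.drop t.length) with hu'
    have hsplit : u = t * u' := by
      apply FreeMonoid.toList.injective
      rw [FreeMonoid.toList_mul, hu']
      rw [FreeMonoid.toList_ofList]
      rw [htu]
      exact (List.take_append_drop t.length u.toList).symm
    have hcomm' : u' * W = W * u' := by
      have h1 : t * (u' * W) = t * (W * u') := by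
        rw [← mul_assoc, ← hsplit, hu, hsplit]
        rw [← mul_assoc, ← htc, mul_assoc]
      exact mul_left_cancel h1
    have hlt : u'.length ≤ L := by
      have : u.length = t.length + u'.length := by
        rw [hsplit, FreeMonoid.length_mul]
      omega
    obtain ⟨e, he⟩ := IH u' hlt hcomm'
    exact ⟨e + 1, by rw [hsplit, he, pow_succ']⟩

end Words


section Cent

variable {K : Type} [Field K]

variable (F : MonoidAlgebra K (M n))

/-- membership in the centralizer of `F`. -/
def Cent (x : MonoidAlgebra K (M n)) : Prop := F * x = x * F

variable {F}

lemma Cent_mul {x y : MonoidAlgebra K (M n)} (hx : Cent F x) (hy : Cent F y) :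
    Cent F (x * y) := by
  unfold Cent at *
  rw [← mul_assoc, hx, mul_assoc, hy, mul_assoc]

lemma Cent_pow {x : MonoidAlgebra K (M n)} (hx : Cent F x) (k : ℕ) : Cent F (x ^ k) := by
  induction k with
  | zero => unfold Cent; rw [pow_zero, mul_one, one_mul]
  | succ k ih => rw [pow_succ]; exact Cent_mul ih hx

lemma Cent_sub {x y : MonoidAlgebra K (M n)} (hx : Cent F x) (hy : Cent F y) :
    Cent F (x - y) := by
  unfold Cent at *
  rw [mul_sub, sub_mul, hx, hy]

lemma Cent_smul {x : MonoidAlgebra K (M n)} (hx : Cent F x) (c : K) : Cent F (c • x) := by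
  unfold Cent at *
  rw [mul_smul_comm, smul_mul_assoc, hx]

lemma Cent_single_one (c : K) : Cent F (MonoidAlgebra.single 1 c) :=
  (MonoidAlgebra.single_one_comm c F).symm

lemma Cent_comm_term {x y : MonoidAlgebra K (M n)} (hx : Cent F x) (hy : Cent F y) :
    Cent F (x * y - y * x) :=
  Cent_sub (Cent_mul hx hy) (Cent_mul hy hx)

lemma V_comm_word {x : MonoidAlgebra K (M n)} (hF : F ≠ 0) (hx0 : x ≠ 0)
    (hx : Cent F x) : V x * V F = V F * V x := by
  have h1 : V (F * x) = V F * V x := V_mul hF hx0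
  have h2 : V (x * F) = V x * V F := V_mul hx0 hF
  rw [← h1, ← h2, hx]

lemma V_neg' (x : MonoidAlgebra K (M n)) : V (-x) = V x := by
  classical
  by_cases hx : x = 0
  . rw [hx, neg_zero]
  . rw [V, V]
    rw [dif_neg hx, dif_neg (neg_ne_zero.2 hx)]
    congr 1
    exact Finsupp.support_neg x.coeff

lemma one_word_le (u : M n) : (1 : M n) ≤ u := by
  rcases eq_or_ne u 1 with rfl | h
  . exact le_rfl
  . have : 0 < u.length := by
      rcases Nat.eq_zero_or_pos u.length with h0 | h0
      . exact absurd (length_eq_zero_iff.1 h0) h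
      . exact h0
    exact le_of_lt (lt_iff'.2 (Or.inl (by rw [FreeMonoid.length_one]; omega)))

lemma pow_word_inj {t : M n} (ht : t ≠ 1) {a b : ℕ} (h : t ^ a = t ^ b) : a = b := by
  by_contra hab
  rcases Nat.lt_or_ge a b with hlt | hge
  . exact absurd h (ne_of_lt (pow_lt_pow_word ht hlt))
  . have : b < a := by omega
    exact absurd h.symm (ne_of_lt (pow_lt_pow_word ht this))

end Cent


section Main

variable {K : Type} [Field K]

lemma hVF_ne_one {F : MonoidAlgebra K (M n)} (hF : F ≠ 0) (hF1 : F.coeff (1 : M n) = 0) :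
    V F ≠ 1 := by
  intro h
  have := V_mem hF
  rw [h, Finsupp.mem_support_iff] at this
  exact this hF1

lemma exp_of_cent {F : MonoidAlgebra K (M n)} (hF : F ≠ 0) (hF1 : F.coeff (1 : M n) = 0)
    {t : M n} (htne : t ≠ 1) (htc : t * V F = V F * t)
    (htmin : ∀ s : M n, s ≠ 1 → s * V F = V F * s → t.length ≤ s.length)
    {x : MonoidAlgebra K (M n)} (hx : Cent F x) (hx0 : x ≠ 0) : ∃ e, V x = t ^ e :=
  eq_pow_of_comm (hVF_ne_one hF hF1) htne htc htmin (V x) (V_comm_word hF hx0 hx)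

lemma comm_expand (x y : MonoidAlgebra K (M n)) (k : ℕ) :
    x * y ^ k - y ^ k * x
      = ∑ i ∈ Finset.range k, y ^ i * (x * y - y * x) * y ^ (k - 1 - i) := by
  induction k with
  | zero => simp
  | succ k ih =>
    rw [Finset.sum_range_succ]
    have hlast : y ^ k * (x * y - y * x) * y ^ (k + 1 - 1 - k)
        = y ^ k * (x * y - y * x) := by
      have h0 : k + 1 - 1 - k = 0 := by omega
      rw [h0, pow_zero, mul_one]
    rw [hlast]
    have hstep : ∀ i ∈ Finset.range k,
        y ^ i * (x * y - y * x) * y ^ (k + 1 - 1 - i)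
          = (y ^ i * (x * y - y * x) * y ^ (k - 1 - i)) * y := by
      intro i hi
      rw [Finset.mem_range] at hi
      rw [mul_assoc (y ^ i * (x * y - y * x)), ← pow_succ]
      congr 2
      omega
    rw [Finset.sum_congr rfl hstep, ← Finset.sum_mul, ← ih, pow_succ]
    noncomm_ring

/-- the key step. -/
lemma core_step {F : MonoidAlgebra K (M n)} (hF : F ≠ 0) (hF1 : F.coeff (1 : M n) = 0)
    {t : M n} (htne : t ≠ 1) (htc : t * V F = V F * t)
    (htmin : ∀ s : M n, s ≠ 1 → s * V F = V F * s → t.length ≤ s.length)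
    {N : ℕ}
    (IH : ∀ x y : MonoidAlgebra K (M n), Cent F x → Cent F y → x * y - y * x ≠ 0 →
      ∀ a b m : ℕ, V x = t ^ a → V y = t ^ b → V (x * y - y * x) = t ^ m →
        N + a + b ≤ m)
    (x y : MonoidAlgebra K (M n)) (hcx : Cent F x) (hcy : Cent F y)
    (hz : x * y - y * x ≠ 0) (a b mz : ℕ)
    (hva : V x = t ^ a) (hvb : V y = t ^ b) (hvm : V (x * y - y * x) = t ^ mz)
    (ha : 1 ≤ a) (hb : 1 ≤ b) (hk : ((a / Nat.gcd a b : ℕ) : K) ≠ 0) :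
    N + 1 + a + b ≤ mz := by
  classical
  have hx0 : x ≠ 0 := by rintro rfl; simp at hz
  have hy0 : y ≠ 0 := by rintro rfl; simp at hz
  set z := x * y - y * x with hzdef
  have hcz : Cent F z := Cent_comm_term hcx hcy
  set g := Nat.gcd a b with hgdef
  have hg : 0 < g := Nat.gcd_pos_of_pos_left b ha
  obtain ⟨A, hA⟩ : g ∣ a := Nat.gcd_dvd_left a b
  obtain ⟨Bb, hB⟩ : g ∣ b := Nat.gcd_dvd_right a b
  set k := a / g with hkdef
  set j := b / g with hjdef
  have hkA : k = A := by rw [hkdef, hA, Nat.mul_div_cancel_left A hg]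
  have hjB : j = Bb := by rw [hjdef, hB, Nat.mul_div_cancel_left Bb hg]
  have hmatch : b * k = a * j := by rw [hkA, hjB, hA, hB]; ring
  have hk1 : 1 ≤ k := by
    rcases Nat.eq_zero_or_pos k with h0 | h1
    . rw [hkA] at h0; rw [h0, Nat.mul_zero] at hA; omega
    . exact h1
  -- the matched powers
  have hyk0 : y ^ k ≠ 0 := pow_ne_zero'' hy0 k
  have hxj0 : x ^ j ≠ 0 := pow_ne_zero'' hx0 j
  have hVyk : V (y ^ k) = t ^ (b * k) := by
    rw [V_pow hy0 k, hvb, ← pow_mul]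
  have hVxj : V (x ^ j) = t ^ (b * k) := by
    rw [V_pow hx0 j, hva, ← pow_mul, hmatch]
  set μ : K := (y.coeff (V y)) ^ k / ((x.coeff (V x)) ^ j) with hμdef
  have hμ0 : μ ≠ 0 :=
    div_ne_zero (pow_ne_zero k (lc_ne_zero hy0)) (pow_ne_zero j (lc_ne_zero hx0))
  set s : MonoidAlgebra K (M n) := μ • x ^ j with hsdef
  have hs0 : s ≠ 0 := smul_ne_zero hμ0 hxj0
  have hVs : V s = t ^ (b * k) := by rw [hsdef, V_smul hμ0, hVxj]
  have hlcs : s.coeff (V s) = (y.coeff (V y)) ^ k := by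
    rw [hsdef, V_smul hμ0, coeff_smul, lc_pow hx0 j, hμdef]
    exact div_mul_cancel₀ _ (pow_ne_zero j (lc_ne_zero hx0))
  have hlcyk : (y ^ k).coeff (V (y ^ k)) = (y.coeff (V y)) ^ k := lc_pow hy0 k
  set r : MonoidAlgebra K (M n) := y ^ k - s with hrdef
  have hcr : Cent F r :=
    Cent_sub (Cent_pow hcy k) (Cent_smul (Cent_pow hcx j) μ)
  -- x commutes with s
  have hxs : x * s = s * x := by
    rw [hsdef, mul_smul_comm, smul_mul_assoc, ← pow_succ', ← pow_succ]
  -- the expansion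
  set SH : MonoidAlgebra K (M n) := x * y ^ k - y ^ k * x with hSHdef
  have hexp : SH = ∑ i ∈ Finset.range k, y ^ i * z * y ^ (k - 1 - i) :=
    comm_expand x y k
  set Wst : M n := t ^ ((k - 1) * b + mz) with hWdef
  have hτ0 : ∀ i, y ^ i * z * y ^ (k - 1 - i) ≠ 0 := fun i =>
    mul_ne_zero'' (mul_ne_zero'' (pow_ne_zero'' hy0 i) hz) (pow_ne_zero'' hy0 _)
  have hτV : ∀ i ∈ Finset.range k, V (y ^ i * z * y ^ (k - 1 - i)) = Wst := by
    intro i hi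
    rw [Finset.mem_range] at hi
    have hc : i + (k - 1 - i) = k - 1 := by omega
    rw [V_mul (mul_ne_zero'' (pow_ne_zero'' hy0 i) hz) (pow_ne_zero'' hy0 _),
      V_mul (pow_ne_zero'' hy0 i) hz, V_pow hy0, V_pow hy0, hvb, hvm,
      ← pow_mul, ← pow_mul, ← pow_add, ← pow_add, hWdef]
    congr 1
    calc b * i + mz + b * (k - 1 - i) = b * (i + (k - 1 - i)) + mz := by ring
      _ = (k - 1) * b + mz := by rw [hc]; ring
  have hτlc : ∀ i ∈ Finset.range k,
      (y ^ i * z * y ^ (k - 1 - i)).coeff (V (y ^ i * z * y ^ (k - 1 - i)))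
        = (y.coeff (V y)) ^ (k - 1) * z.coeff (V z) := by
    intro i hi
    rw [Finset.mem_range] at hi
    have hc : i + (k - 1 - i) = k - 1 := by omega
    rw [lc_mul (mul_ne_zero'' (pow_ne_zero'' hy0 i) hz) (pow_ne_zero'' hy0 _),
      lc_mul (pow_ne_zero'' hy0 i) hz, lc_pow hy0, lc_pow hy0]
    calc (y.coeff (V y)) ^ i * z.coeff (V z) * (y.coeff (V y)) ^ (k - 1 - i)
        = (y.coeff (V y)) ^ (i + (k - 1 - i)) * z.coeff (V z) := by ring
      _ = (y.coeff (V y)) ^ (k - 1) * z.coeff (V z) := by rw [hc]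
  have hcoeff : SH.coeff Wst = (k : K) * ((y.coeff (V y)) ^ (k - 1) * z.coeff (V z)) := by
    rw [hexp, MonoidAlgebra.coeff_sum, Finsupp.finset_sum_apply]
    have : ∀ i ∈ Finset.range k,
        (y ^ i * z * y ^ (k - 1 - i)).coeff Wst = (y.coeff (V y)) ^ (k - 1) * z.coeff (V z) := by
      intro i hi
      rw [← hτV i hi, hτlc i hi]
    rw [Finset.sum_congr rfl this, Finset.sum_const, Finset.card_range, nsmul_eq_mul]
  have hcne : SH.coeff Wst ≠ 0 :=
    hcoeff ▸ mul_ne_zero hk (mul_ne_zero (pow_ne_zero _ (lc_ne_zero hy0)) (lc_ne_zero hz))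
  have hSH0 : SH ≠ 0 := by
    intro h
    rw [h] at hcne
    simp at hcne
  have hVSH : V SH = Wst := by
    refine le_antisymm (V_le hSH0 (Finsupp.mem_support_iff.2 hcne)) ?_
    have hmem : V SH ∈ (∑ i ∈ Finset.range k, y ^ i * z * y ^ (k - 1 - i)).coeff.support := by
      rw [← hexp]
      exact V_mem hSH0
    have := Finsupp.support_finset_sum (by rwa [MonoidAlgebra.coeff_sum] at hmem : V SH ∈ (∑ i ∈ Finset.range k, (y ^ i * z * y ^ (k - 1 - i)).coeff).support)
    rw [Finset.mem_biUnion] at this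
    obtain ⟨i, hi, hmem'⟩ := this
    have := V_le (hτ0 i) hmem'
    rw [hτV i hi] at this
    exact this
  -- r is nonzero
  have hr0 : r ≠ 0 := by
    intro h
    have hys : y ^ k = s := by rw [← sub_eq_zero]; exact h
    have : SH = 0 := by
      rw [hSHdef, hys, hxs, sub_self]
    exact hSH0 this
  have hSHr : SH = x * r - r * x := by
    rw [hrdef, mul_sub, sub_mul, hxs, hSHdef]
    abel
  obtain ⟨er, her⟩ := exp_of_cent hF hF1 htne htc htmin hcr hr0
  have hVr_gt : V (y ^ k) < V r := by
    apply V_sub_gt hyk0 hs0 (hVyk.trans hVs.symm) (hlcyk.trans (hlcs.symm))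
    intro h
    exact hr0 (by rw [hrdef, h, sub_self])
  have her_gt : b * k < er := by
    rw [hVyk, her] at hVr_gt
    exact (pow_word_lt_iff htne).1 hVr_gt
  have hIH := IH x r hcx hcr (hSHr ▸ hSH0) a er ((k - 1) * b + mz) hva her
    (by rw [← hSHr, hVSH])
  -- final arithmetic
  have hkb : (k - 1) * b + b = k * b := by
    have h1 : k - 1 + 1 = k := by omega
    calc (k - 1) * b + b = ((k - 1) + 1) * b := by ring
      _ = k * b := by rw [h1]
  have hbk : b * k = k * b := Nat.mul_comm b k
  set P := k * b with hP
  set Q := (k - 1) * b with hQ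
  rw [hbk] at her_gt
  omega

end Main


section Outer

variable {K : Type} [Field K]

lemma char_helper {a b : ℕ} (ha : 1 ≤ a) (h0 : ((a / Nat.gcd a b : ℕ) : K) = 0) :
    ((b / Nat.gcd a b : ℕ) : K) ≠ 0 := by
  intro h1
  have hg : 0 < Nat.gcd a b := Nat.gcd_pos_of_pos_left b ha
  have hco : Nat.Coprime (a / Nat.gcd a b) (b / Nat.gcd a b) :=
    Nat.coprime_div_gcd_div_gcd hg
  have hp1 : ringChar K ∣ a / Nat.gcd a b := (CharP.cast_eq_zero_iff K (ringChar K) _).1 h0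
  have hp2 : ringChar K ∣ b / Nat.gcd a b := (CharP.cast_eq_zero_iff K (ringChar K) _).1 h1
  have : ringChar K ∣ 1 := hco ▸ Nat.dvd_gcd hp1 hp2
  have : ((1 : ℕ) : K) = 0 := (CharP.cast_eq_zero_iff K (ringChar K) 1).2 this
  rw [Nat.cast_one] at this
  exact one_ne_zero this

lemma commutator_sub_single (x y : MonoidAlgebra K (M n)) (cx cy : K) :
    (x - MonoidAlgebra.single 1 cx) * (y - MonoidAlgebra.single 1 cy)
      - (y - MonoidAlgebra.single 1 cy) * (x - MonoidAlgebra.single 1 cx)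
      = x * y - y * x := by
  have h1 : MonoidAlgebra.single (1 : M n) cx * y = y * MonoidAlgebra.single 1 cx :=
    MonoidAlgebra.single_one_comm cx y
  have h2 : MonoidAlgebra.single (1 : M n) cy * x = x * MonoidAlgebra.single 1 cy :=
    MonoidAlgebra.single_one_comm cy x
  have h3 : MonoidAlgebra.single (1 : M n) cx * MonoidAlgebra.single (1 : M n) cy
      = MonoidAlgebra.single (1 : M n) cy * MonoidAlgebra.single (1 : M n) cx :=
    MonoidAlgebra.single_one_comm cx _
  rw [mul_sub, mul_sub, sub_mul, sub_mul, sub_mul, sub_mul, h1, h2, h3]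
  abel

/-- main induction. -/
lemma main_ineq {F : MonoidAlgebra K (M n)} (hF : F ≠ 0) (hF1 : F.coeff (1 : M n) = 0)
    {t : M n} (htne : t ≠ 1) (htc : t * V F = V F * t)
    (htmin : ∀ s : M n, s ≠ 1 → s * V F = V F * s → t.length ≤ s.length)
    (N : ℕ) :
    ∀ x y : MonoidAlgebra K (M n), Cent F x → Cent F y → x * y - y * x ≠ 0 →
      ∀ a b m : ℕ, V x = t ^ a → V y = t ^ b → V (x * y - y * x) = t ^ m →
        N + a + b ≤ m := by
  classical
  have hd : 0 < t.length := by
    rcases Nat.eq_zero_or_pos t.length with h0 | h0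
    . exact absurd (length_eq_zero_iff.1 h0) htne
    . exact h0
  induction N with
  | zero =>
    intro x y hcx hcy hz a b m hva hvb hvm
    have hx0 : x ≠ 0 := by rintro rfl; simp at hz
    have hy0 : y ≠ 0 := by rintro rfl; simp at hz
    have hmem := V_mem hz
    have hsub := Finsupp.support_sub hmem
    have hlen : (a + b) * t.length ≤ m * t.length := by
      have hVxy : (V x * V y).length = (a + b) * t.length := by
        rw [FreeMonoid.length_mul, hva, hvb, length_pow, length_pow]; ring
      have hVyx : (V y * V x).length = (a + b) * t.length := by
        rw [FreeMonoid.length_mul, hva, hvb, length_pow, length_pow]; ring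
      have hm : (V (x * y - y * x)).length = m * t.length := by
        rw [hvm, length_pow]
      rcases Finset.mem_union.1 hsub with h | h
      . have := length_le_of_le (support_mul_V_le hx0 hy0 h)
        omega
      . have := length_le_of_le (support_mul_V_le hy0 hx0 h)
        omega
    have := Nat.le_of_mul_le_mul_right hlen hd
    omega
  | succ N IH =>
    intro x y hcx hcy hz a b m hva hvb hvm
    have hx0 : x ≠ 0 := by rintro rfl; simp at hz
    have hy0 : y ≠ 0 := by rintro rfl; simp at hz
    -- remove the constant coefficients
    set x1 := x - MonoidAlgebra.single 1 (x.coeff (1 : M n)) with hx1def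
    set y1 := y - MonoidAlgebra.single 1 (y.coeff (1 : M n)) with hy1def
    have hzz : x1 * y1 - y1 * x1 = x * y - y * x := commutator_sub_single x y _ _
    have hcx1 : Cent F x1 := Cent_sub hcx (Cent_single_one _)
    have hcy1 : Cent F y1 := Cent_sub hcy (Cent_single_one _)
    have hz1 : x1 * y1 - y1 * x1 ≠ 0 := by rw [hzz]; exact hz
    have hx10 : x1 ≠ 0 := by
      intro h
      rw [h, zero_mul, mul_zero, sub_zero] at hz1
      exact hz1 rfl
    have hy10 : y1 ≠ 0 := by
      intro h
      rw [h, zero_mul, mul_zero, sub_self] at hz1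
      exact hz1 rfl
    have hx11 : x1.coeff (1 : M n) = 0 := by
      rw [hx1def, MonoidAlgebra.coeff_sub, Finsupp.sub_apply]
      rw [show (MonoidAlgebra.single (1 : M n) (x.coeff (1 : M n))).coeff (1 : M n) = x.coeff 1 from
        Finsupp.single_eq_same, sub_self]
    have hy11 : y1.coeff (1 : M n) = 0 := by
      rw [hy1def, MonoidAlgebra.coeff_sub, Finsupp.sub_apply]
      rw [show (MonoidAlgebra.single (1 : M n) (y.coeff (1 : M n))).coeff (1 : M n) = y.coeff 1 from
        Finsupp.single_eq_same, sub_self]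
    obtain ⟨a1, ha1⟩ := exp_of_cent hF hF1 htne htc htmin hcx1 hx10
    obtain ⟨b1, hb1⟩ := exp_of_cent hF hF1 htne htc htmin hcy1 hy10
    have ha1pos : 1 ≤ a1 := by
      rcases Nat.eq_zero_or_pos a1 with h0 | h1
      . rw [h0, pow_zero] at ha1
        have : (1 : M n) ∈ x1.coeff.support := ha1 ▸ V_mem hx10
        rw [Finsupp.mem_support_iff] at this
        exact absurd hx11 this
      . exact h1
    have hb1pos : 1 ≤ b1 := by
      rcases Nat.eq_zero_or_pos b1 with h0 | h1
      . rw [h0, pow_zero] at hb1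
        have : (1 : M n) ∈ y1.coeff.support := hb1 ▸ V_mem hy10
        rw [Finsupp.mem_support_iff] at this
        exact absurd hy11 this
      . exact h1
    -- a1 ≥ a and b1 ≥ b
    have ha1ge : a ≤ a1 := by
      by_cases hc : x.coeff (1 : M n) = 0
      . have : x1 = x := by rw [hx1def, hc, MonoidAlgebra.single_zero, sub_zero]
        rw [this, hva] at ha1
        rw [pow_word_inj htne ha1]
      . have h1s : (1 : M n) ∈ x.coeff.support := Finsupp.mem_support_iff.2 hc
        have : V x = 1 := le_antisymm (V_le hx0 h1s) (one_word_le _)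
        rw [hva] at this
        have : a = 0 := pow_word_inj htne (this.trans (pow_zero t).symm)
        omega
    have hb1ge : b ≤ b1 := by
      by_cases hc : y.coeff (1 : M n) = 0
      . have : y1 = y := by rw [hy1def, hc, MonoidAlgebra.single_zero, sub_zero]
        rw [this, hvb] at hb1
        rw [pow_word_inj htne hb1]
      . have h1s : (1 : M n) ∈ y.coeff.support := Finsupp.mem_support_iff.2 hc
        have : V y = 1 := le_antisymm (V_le hy0 h1s) (one_word_le _)
        rw [hvb] at this
        have : b = 0 := pow_word_inj htne (this.trans (pow_zero t).symm)
        omega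
    have hvm1 : V (x1 * y1 - y1 * x1) = t ^ m := by rw [hzz]; exact hvm
    by_cases hchar : ((a1 / Nat.gcd a1 b1 : ℕ) : K) = 0
    . -- use the swapped pair
      have hk2 : ((b1 / Nat.gcd b1 a1 : ℕ) : K) ≠ 0 := by
        rw [Nat.gcd_comm]
        exact char_helper ha1pos hchar
      have hz2 : y1 * x1 - x1 * y1 ≠ 0 := by
        intro h
        apply hz1
        have : x1 * y1 - y1 * x1 = -(y1 * x1 - x1 * y1) := by abel
        rw [this, h, neg_zero]
      have hvm2 : V (y1 * x1 - x1 * y1) = t ^ m := by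
        have : y1 * x1 - x1 * y1 = -(x1 * y1 - y1 * x1) := by abel
        rw [this, V_neg', hvm1]
      have := core_step hF hF1 htne htc htmin IH y1 x1 hcy1 hcx1 hz2 b1 a1 m
        hb1 ha1 hvm2 hb1pos ha1pos hk2
      omega
    . have := core_step hF hF1 htne htc htmin IH x1 y1 hcx1 hcy1 hz1 a1 b1 m
        ha1 hb1 hvm1 ha1pos hb1pos hchar
      omega

end Outer


section Glue

variable {K : Type} [Field K]

lemma algebraMap_eq_single (c : K) :
    algebraMap K (MonoidAlgebra K (M n)) c = MonoidAlgebra.single 1 c := by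
  have h := congrFun (MonoidAlgebra.coe_algebraMap (R := K) (A := K) (M := M n)) c
  simpa using h

theorem monalg_commutative (f g h : MonoidAlgebra K (M n))
    (hf : ∀ c : K, f ≠ MonoidAlgebra.single 1 c)
    (hg : f * g = g * f) (hh : f * h = h * f) : g * h = h * g := by
  classical
  by_contra hne
  set F := f - MonoidAlgebra.single 1 (f.coeff (1 : M n)) with hFdef
  have hF : F ≠ 0 := by
    intro h0
    apply hf (f.coeff (1 : M n))
    rw [← sub_eq_zero]
    exact h0
  have hF1 : F.coeff (1 : M n) = 0 := by
    rw [hFdef, MonoidAlgebra.coeff_sub, Finsupp.sub_apply]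
    rw [show (MonoidAlgebra.single (1 : M n) (f.coeff (1 : M n))).coeff (1 : M n) = f.coeff 1 from
      Finsupp.single_eq_same, sub_self]
  have hcg : Cent F g := by
    unfold Cent
    rw [hFdef, sub_mul, mul_sub, hg, MonoidAlgebra.single_one_comm]
  have hch : Cent F h := by
    unfold Cent
    rw [hFdef, sub_mul, mul_sub, hh, MonoidAlgebra.single_one_comm]
  obtain ⟨t, htne, htc, htmin⟩ := exists_min_word (V F) (hVF_ne_one hF hF1)
  have hz : g * h - h * g ≠ 0 := sub_ne_zero.2 hne
  have hg0 : g ≠ 0 := by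
    intro h0
    rw [h0, zero_mul, mul_zero, sub_zero] at hz
    exact hz rfl
  have hh0 : h ≠ 0 := by
    intro h0
    rw [h0, zero_mul, mul_zero, sub_self] at hz
    exact hz rfl
  have hcz : Cent F (g * h - h * g) := Cent_comm_term hcg hch
  obtain ⟨a, ha⟩ := exp_of_cent hF hF1 htne htc htmin hcg hg0
  obtain ⟨b, hb⟩ := exp_of_cent hF hF1 htne htc htmin hch hh0
  obtain ⟨m, hm⟩ := exp_of_cent hF hF1 htne htc htmin hcz hz
  have := main_ineq hF hF1 htne htc htmin (m + 1) g h hcg hch hz a b m ha hb hm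
  omega

end Glue


end Bergman

/-- The centralizer of a nonscalar element of a free associative algebra is
commutative. -/
theorem freeAlgebra_centralizer_commutative
    (K : Type) [Field K] (n : ℕ) (f g h : FreeAlgebra K (Fin n))
    (hf : f ∉ Set.range (algebraMap K (FreeAlgebra K (Fin n))))
    (hg : f * g = g * f) (hh : f * h = h * f) :
    g * h = h * g := by
  classical
  let φ := FreeAlgebra.equivMonoidAlgebraFreeMonoid (R := K) (X := Fin n)
  apply φ.injective
  rw [map_mul, map_mul]
  apply Bergman.monalg_commutative (φ f) (φ g) (φ h)
  . intro c hc
    apply hf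
    refine ⟨c, ?_⟩
    have : φ f = algebraMap K (MonoidAlgebra K (Bergman.M n)) c := by
      rw [hc, Bergman.algebraMap_eq_single]
    have h2 : f = φ.symm (algebraMap K (MonoidAlgebra K (Bergman.M n)) c) := by
      rw [← this, AlgEquiv.symm_apply_apply]
    rw [h2, AlgEquiv.commutes]
  . rw [← map_mul, ← map_mul, hg]
  . rw [← map_mul, ← map_mul, hh]
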